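/- Let q > 1 be real, D = diag(q, −q⁻¹), and U = ((1/[2]_q, √[3]_q/[2]_q), (−√[3]_q/[2]_q, 1/[2]_q)). Then the matrix M = D·(U·D·Uᵀ) satisfies M³ = 1 and M ≠ 1; equivalently, M has trace −1 and determinant 1, so its complex eigenvalues are the primitive cube roots of unity e^{±2πi/3}. -/

import Mathlib

open Matrix

/-- The quantum integer `[n]_q = (qⁿ − q⁻ⁿ)/(q − q⁻¹)`. -/
noncomputable def qn (q : ℝ) (n : ℤ) : ℝ := (q ^ n - q ^ (-n)) / (q - q⁻¹)

/-- The diagonal R-matrix `D = diag(q, −q⁻¹)`. -/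
noncomputable def Dmat (q : ℝ) : Matrix (Fin 2) (Fin 2) ℝ := !![q, 0; 0, -q⁻¹]

/-- The mixing (Racah) matrix `U`. -/
noncomputable def Umat (q : ℝ) : Matrix (Fin 2) (Fin 2) ℝ :=
  !![1 / qn q 2, Real.sqrt (qn q 3) / qn q 2;
     -Real.sqrt (qn q 3) / qn q 2, 1 / qn q 2]

/-- A real 2×2 matrix with trace −1 and determinant 1 satisfies `A³ = 1`
(Cayley–Hamilton for the polynomial `λ² + λ + 1`). -/
lemma cube_of_trace_det (A : Matrix (Fin 2) (Fin 2) ℝ) (h1 : A.trace = -1)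
    (h2 : A.det = 1) : A ^ 3 = 1 := by
  rw [Matrix.trace_fin_two] at h1
  rw [Matrix.det_fin_two] at h2
  rw [pow_succ, pow_succ, pow_one]
  ext i j
  fin_cases i <;> fin_cases j <;>
    simp [Matrix.mul_apply, Fin.sum_univ_two, Matrix.one_apply]
  · linear_combination (A 0 0^2 + A 0 0*A 1 1 - A 0 0 - 1) * h1 - (2*A 0 0 + A 1 1) * h2
  · linear_combination (A 0 1*(A 0 0 + A 1 1 - 1)) * h1 - A 0 1 * h2
  · linear_combination (A 1 0*(A 0 0 + A 1 1 - 1)) * h1 - A 1 0 * h2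
  · linear_combination (A 1 1^2 + A 0 0*A 1 1 - A 1 1 - 1) * h1 - (2*A 1 1 + A 0 0) * h2

/-- for `M = D·(U·D·Uᵀ)` one has `M³ = 1`, `M ≠ 1`, `trace M = −1`
and `det M = 1` (hence its complex eigenvalues are the primitive cube roots of unity). -/
theorem torus_word_cube_root (q : ℝ) (hq : 1 < q) :
    (Dmat q * (Umat q * Dmat q * (Umat q)ᵀ)) ^ 3 = 1 ∧
    Dmat q * (Umat q * Dmat q * (Umat q)ᵀ) ≠ 1 ∧
    (Dmat q * (Umat q * Dmat q * (Umat q)ᵀ)).trace = -1 ∧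
    (Dmat q * (Umat q * Dmat q * (Umat q)ᵀ)).det = 1 := by
  have hq0 : (0:ℝ) < q := lt_trans one_pos hq
  have hqne : q ≠ 0 := ne_of_gt hq0
  have hinv : q⁻¹ < q := lt_trans (inv_lt_one_of_one_lt₀ hq) hq
  have hd : q - q⁻¹ ≠ 0 := sub_ne_zero.mpr (ne_of_gt hinv)
  have hqn2 : qn q 2 = q + q⁻¹ := by
    rw [qn, _root_.zpow_neg, show (2:ℤ)=((2:ℕ):ℤ) from rfl, zpow_natCast, div_eq_iff hd]
    field_simp
    ring
  have hqn3 : qn q 3 = q^2 + 1 + (q⁻¹)^2 := by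
    rw [qn, _root_.zpow_neg, show (3:ℤ)=((3:ℕ):ℤ) from rfl, zpow_natCast, div_eq_iff hd]
    field_simp
    ring
  have hq3pos : 0 < qn q 3 := by rw [hqn3]; positivity
  have hqn2ne : qn q 2 ≠ 0 := by rw [hqn2]; positivity
  have hUT : (Umat q)ᵀ = !![1 / qn q 2, -(Real.sqrt (qn q 3) / qn q 2);
      Real.sqrt (qn q 3) / qn q 2, 1 / qn q 2] := by
    rw [Umat]
    ext i j
    fin_cases i <;> fin_cases j <;> simp <;> ring
  have htr : (Dmat q * (Umat q * Dmat q * (Umat q)ᵀ)).trace = -1 := by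
    rw [Matrix.trace_fin_two]
    rw [hUT]
    simp [Dmat, Umat, Matrix.mul_apply, Fin.sum_univ_two]
    ring_nf
    rw [Real.sq_sqrt hq3pos.le, hqn3, hqn2]
    field_simp
    ring
  have hdet : (Dmat q * (Umat q * Dmat q * (Umat q)ᵀ)).det = 1 := by
    rw [Matrix.det_mul, Matrix.det_mul, Matrix.det_mul, Matrix.det_transpose]
    have hD : (Dmat q).det = -1 := by
      rw [Dmat, Matrix.det_fin_two_of]
      field_simp
      norm_num
    have hU : (Umat q).det = 1 := by
      rw [Umat, Matrix.det_fin_two_of]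
      ring_nf
      rw [Real.sq_sqrt hq3pos.le, hqn3, hqn2]
      field_simp
      ring
    rw [hD, hU]
    ring
  refine ⟨cube_of_trace_det _ htr hdet, ?_, htr, hdet⟩
  intro h
  rw [h, Matrix.trace_one] at htr
  norm_num at htr
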